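/- The unique κ ∈ (0, √2) satisfying κ² − 1 = √(1 − κ²/2) is κ = √(3/2). Consequently, the real-valued amplitude a(x,0) of the SFB vanishes at its minimizer (where cos(κ r₀ √(γ/β) x) = −1) if and only if κ ≤ √(3/2); i.e. the critical wavenumber for wave dislocation is κ_crit = √(3/2). -/

import Mathlib

/-- The unique κ ∈ (0, √2) with κ² − 1 = √(1 − κ²/2) is κ = √(3/2); consequently
the SFB amplitude a(x,0) has a zero iff κ ≤ √(3/2): κ_crit = √(3/2). -/
theorem stmt_9 (β γ r₀ : ℝ) (hβ : 0 < β) (hγ : 0 < γ) (hr : 0 < r₀) :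
    (∀ κ ∈ Set.Ioo 0 (Real.sqrt 2),
      (κ ^ 2 - 1 = Real.sqrt (1 - κ ^ 2 / 2) ↔ κ = Real.sqrt (3 / 2))) ∧
    (∀ κ ∈ Set.Ioo 0 (Real.sqrt 2),
      ((∃ x : ℝ, κ ^ 2 - 1
          + Real.sqrt (1 - κ ^ 2 / 2) * Real.cos (κ * r₀ * Real.sqrt (γ / β) * x) = 0) ↔
        κ ≤ Real.sqrt (3 / 2))) := by
  have h32 : Real.sqrt (3 / 2) ^ 2 = 3 / 2 := Real.sq_sqrt (by norm_num)
  constructor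
  · rintro κ ⟨hκ0, hκ2⟩
    have hκsq : κ ^ 2 < 2 := by
      nlinarith [Real.sq_sqrt (show (0:ℝ) ≤ 2 by norm_num), Real.sqrt_nonneg 2]
    have h1 : (0:ℝ) ≤ 1 - κ ^ 2 / 2 := by linarith
    constructor
    · intro h
      have h2 : (κ ^ 2 - 1) ^ 2 = 1 - κ ^ 2 / 2 := by rw [h]; exact Real.sq_sqrt h1
      have h3 : 0 ≤ κ ^ 2 - 1 := h ▸ Real.sqrt_nonneg _
      have h4 : κ ^ 2 = 3 / 2 := by nlinarith
      have := Real.sqrt_sq hκ0.le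
      rw [← this, h4]
    · intro h
      subst h
      rw [h32, show (1:ℝ) - 3/2/2 = (1/2)^2 by norm_num, Real.sqrt_sq (by norm_num)]
      norm_num
  · rintro κ ⟨hκ0, hκ2⟩
    have hκsq : κ ^ 2 < 2 := by
      nlinarith [Real.sq_sqrt (show (0:ℝ) ≤ 2 by norm_num), Real.sqrt_nonneg 2]
    set s := Real.sqrt (1 - κ ^ 2 / 2) with hs
    have hs2 : s ^ 2 = 1 - κ ^ 2 / 2 := Real.sq_sqrt (by linarith)
    have hspos : 0 < s := Real.sqrt_pos.mpr (by linarith)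
    have hω : 0 < κ * r₀ * Real.sqrt (γ / β) :=
      mul_pos (mul_pos hκ0 hr) (Real.sqrt_pos.mpr (div_pos hγ hβ))
    constructor
    · rintro ⟨x, hx⟩
      have hc1 := Real.neg_one_le_cos (κ * r₀ * Real.sqrt (γ / β) * x)
      have hc2 := Real.cos_le_one (κ * r₀ * Real.sqrt (γ / β) * x)
      have hκ32 : κ ^ 2 ≤ 3 / 2 := by nlinarith
      nlinarith [Real.sqrt_nonneg (3/2 : ℝ), sq_nonneg (κ - Real.sqrt (3/2))]
    · intro h
      have hκ32 : κ ^ 2 ≤ 3 / 2 := by nlinarith [Real.sqrt_nonneg (3/2 : ℝ)]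
      set t := (1 - κ ^ 2) / s with ht
      have htb : (κ ^ 2 - 1) ^ 2 ≤ s ^ 2 := by nlinarith
      have ht1 : -1 ≤ t := by
        rw [ht, le_div_iff₀ hspos]; nlinarith
      have ht2 : t ≤ 1 := by
        rw [ht, div_le_iff₀ hspos]; nlinarith
      refine ⟨Real.arccos t / (κ * r₀ * Real.sqrt (γ / β)), ?_⟩
      rw [mul_div_cancel₀ _ (ne_of_gt hω), Real.cos_arccos ht1 ht2, ht]
      field_simp
      ring
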